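/- Distance composition through a separator: let G be a graph with a separator B, splitting G into H and G_B with V(H) ∩ V(G_B) = B and no edges between V(H)∖B and V(G_B)∖B. Let G_B' be another graph with the same boundary B such that for all u, v ∈ B, d_{G_B'}(u,v) ≥ d_{G_B}(u,v). Let G' = H ⊕ G_B'. Then for all vertices x, y ∈ V(H), d_{G'}(x,y) ≥ d_G(x,y). -/

import Mathlib

open SimpleGraph in
private lemma edist_induce_le_aux {U : Type} (G : SimpleGraph U) (s : Set U) (a b : s) :
    G.edist a.1 b.1 ≤ (G.induce s).edist a b := by
  rcases eq_or_ne ((G.induce s).edist a b) ⊤ with h | h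
  · simp [h]
  · obtain ⟨p, hp⟩ := exists_walk_of_edist_ne_top h
    rw [← hp]
    have := edist_le (p.map (SimpleGraph.Embedding.induce s).toHom)
    rw [SimpleGraph.Walk.length_map] at this
    simpa using this

open SimpleGraph in
private lemma statement11_aux {U : Type} (G G' : SimpleGraph U)
    (B VH VB VB' : Set U)
    (hB1 : VH ∩ VB = B) (hB2 : VH ∩ VB' = B)
    (hG'side : ∀ x y : U, G'.Adj x y → (x ∈ VH ∧ y ∈ VH) ∨ (x ∈ VB' ∧ y ∈ VB'))
    (hagree : ∀ x y : U, x ∈ VH → y ∈ VH → (G.Adj x y ↔ G'.Adj x y))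
    (hdist : ∀ u v : U, ∀ (hu : u ∈ VB) (hv : v ∈ VB) (hu' : u ∈ VB') (hv' : v ∈ VB'),
      u ∈ B → v ∈ B →
        (G.induce VB).edist ⟨u, hu⟩ ⟨v, hv⟩ ≤ (G'.induce VB').edist ⟨u, hu'⟩ ⟨v, hv'⟩) :
    ∀ n : ℕ, ∀ x y : U, ∀ W : G'.Walk x y, W.length ≤ n → y ∈ VH →
      (x ∈ VH → G.edist x y ≤ W.length) ∧
      (∀ hx : x ∈ VB', ∃ b, ∃ _ : b ∈ B, ∃ hb : b ∈ VB',
        (G'.induce VB').edist ⟨x, hx⟩ ⟨b, hb⟩ + G.edist b y ≤ W.length) := by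
  have hBVB : B ⊆ VB := by rw [← hB1]; exact Set.inter_subset_right
  -- base helper for nil-type cases
  intro n
  induction n with
  | zero =>
    intro x y W hlen hy
    have h0 : W.length = 0 := Nat.le_zero.mp hlen
    have hxy : x = y := W.eq_of_length_eq_zero h0
    subst hxy
    refine ⟨fun _ => by simp, fun hx => ⟨x, ?_, hx, by simp⟩⟩
    rw [← hB2]; exact ⟨hy, hx⟩
  | succ n IH =>
    intro x y W hlen hy
    cases W with
    | nil =>
      refine ⟨fun _ => by simp, fun hx => ⟨x, ?_, hx, by simp⟩⟩
      rw [← hB2]; exact ⟨hy, hx⟩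
    | cons h W' =>
      rename_i z
      simp only [Walk.length_cons] at hlen ⊢
      have hlen' : W'.length ≤ n := Nat.succ_le_succ_iff.mp hlen
      have IH' := IH z y W' hlen' hy
      have hcast : ((W'.length + 1 : ℕ) : ℕ∞) = 1 + (W'.length : ℕ∞) := by
        push_cast; ring
      have ha : x ∈ VH → G.edist x y ≤ (W'.length + 1 : ℕ) := by
        intro hxH
        rcases hG'side x z h with ⟨_, hzH⟩ | ⟨hxB', hzB'⟩
        · have hGA : G.Adj x z := (hagree x z hxH hzH).mpr h
          have h1 : G.edist x z ≤ 1 := by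
            rw [edist_eq_one_iff_adj.mpr hGA]
          calc G.edist x y ≤ G.edist x z + G.edist z y := SimpleGraph.edist_triangle
            _ ≤ 1 + (W'.length : ℕ∞) := add_le_add h1 (IH'.1 hzH)
            _ = _ := hcast.symm
        · obtain ⟨b, hbB, hb, hsum⟩ := IH'.2 hzB'
          have hxB : x ∈ B := by rw [← hB2]; exact ⟨hxH, hxB'⟩
          have hadj : (G'.induce VB').Adj ⟨x, hxB'⟩ ⟨z, hzB'⟩ := h
          have h1 : (G'.induce VB').edist ⟨x, hxB'⟩ ⟨b, hb⟩ ≤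
              1 + (G'.induce VB').edist ⟨z, hzB'⟩ ⟨b, hb⟩ := by
            calc (G'.induce VB').edist ⟨x, hxB'⟩ ⟨b, hb⟩
                ≤ (G'.induce VB').edist ⟨x, hxB'⟩ ⟨z, hzB'⟩ +
                  (G'.induce VB').edist ⟨z, hzB'⟩ ⟨b, hb⟩ := SimpleGraph.edist_triangle
              _ ≤ _ := by
                  gcongr
                  rw [edist_eq_one_iff_adj.mpr hadj]
          have h2 : G.edist x b ≤ (G'.induce VB').edist ⟨x, hxB'⟩ ⟨b, hb⟩ :=
            le_trans (edist_induce_le_aux G VB ⟨x, hBVB hxB⟩ ⟨b, hBVB hbB⟩)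
              (hdist x b (hBVB hxB) (hBVB hbB) hxB' hb hxB hbB)
          calc G.edist x y ≤ G.edist x b + G.edist b y := SimpleGraph.edist_triangle
            _ ≤ (1 + (G'.induce VB').edist ⟨z, hzB'⟩ ⟨b, hb⟩) + G.edist b y := by
                gcongr
                exact le_trans h2 h1
            _ = 1 + ((G'.induce VB').edist ⟨z, hzB'⟩ ⟨b, hb⟩ + G.edist b y) := by
                rw [add_assoc]
            _ ≤ 1 + (W'.length : ℕ∞) := by gcongr
            _ = _ := hcast.symm
      refine ⟨ha, ?_⟩
      intro hx
      by_cases hxH : x ∈ VH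
      · refine ⟨x, by rw [← hB2]; exact ⟨hxH, hx⟩, hx, ?_⟩
        simpa using ha hxH
      · rcases hG'side x z h with ⟨hxH', _⟩ | ⟨_, hzB'⟩
        · exact absurd hxH' hxH
        · obtain ⟨b, hbB, hb, hsum⟩ := IH'.2 hzB'
          refine ⟨b, hbB, hb, ?_⟩
          have hadj : (G'.induce VB').Adj ⟨x, hx⟩ ⟨z, hzB'⟩ := h
          calc (G'.induce VB').edist ⟨x, hx⟩ ⟨b, hb⟩ + G.edist b y
              ≤ ((G'.induce VB').edist ⟨x, hx⟩ ⟨z, hzB'⟩ +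
                 (G'.induce VB').edist ⟨z, hzB'⟩ ⟨b, hb⟩) + G.edist b y := by
                gcongr
                exact SimpleGraph.edist_triangle
            _ ≤ (1 + (G'.induce VB').edist ⟨z, hzB'⟩ ⟨b, hb⟩) + G.edist b y := by
                gcongr
                rw [edist_eq_one_iff_adj.mpr hadj]
            _ = 1 + ((G'.induce VB').edist ⟨z, hzB'⟩ ⟨b, hb⟩ + G.edist b y) := by
                rw [add_assoc]
            _ ≤ 1 + (W'.length : ℕ∞) := by gcongr
            _ = _ := hcast.symm

/-- distance composition through a separator. `G = H ⊕ G_B` is split by the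
separator `B` into sides `VH` and `VB` (`VH ∩ VB = B`, every edge inside one side), and
`G' = H ⊕ G_B'` is obtained by replacing `G_B` by another graph `G_B'` with the same
boundary `B` (sides `VH` and `VB'`, `G` and `G'` agree on `VH`). If for all `u, v ∈ B` the
distance between `u` and `v` in `G_B'` is at least their distance in `G_B`, then for all
vertices `x, y ∈ VH`, `d_{G'}(x,y) ≥ d_G(x,y)`. -/
theorem statement11 {U : Type} (G G' : SimpleGraph U)
    (B VH VB VB' : Set U)
    (hB1 : VH ∩ VB = B) (hB2 : VH ∩ VB' = B)
    (hGside : ∀ x y : U, G.Adj x y → (x ∈ VH ∧ y ∈ VH) ∨ (x ∈ VB ∧ y ∈ VB))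
    (hG'side : ∀ x y : U, G'.Adj x y → (x ∈ VH ∧ y ∈ VH) ∨ (x ∈ VB' ∧ y ∈ VB'))
    (hagree : ∀ x y : U, x ∈ VH → y ∈ VH → (G.Adj x y ↔ G'.Adj x y))
    (hdist : ∀ u v : U, ∀ (hu : u ∈ VB) (hv : v ∈ VB) (hu' : u ∈ VB') (hv' : v ∈ VB'),
      u ∈ B → v ∈ B →
        (G.induce VB).edist ⟨u, hu⟩ ⟨v, hv⟩ ≤ (G'.induce VB').edist ⟨u, hu'⟩ ⟨v, hv'⟩) :
    ∀ x y : U, x ∈ VH → y ∈ VH → G.edist x y ≤ G'.edist x y := by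
  intro x y hx hy
  rcases eq_or_ne (G'.edist x y) ⊤ with h | h
  · simp [h]
  · obtain ⟨p, hp⟩ := SimpleGraph.exists_walk_of_edist_ne_top h
    rw [← hp]
    exact (statement11_aux G G' B VH VB VB' hB1 hB2 hG'side hagree hdist
      p.length x y p le_rfl hy).1 hx
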